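/- Let ρ, P, M be d×d complex matrices where ρ is Hermitian positive semidefinite with Tr ρ = 1, P is a Hermitian projection (P² = P = P*), M is Hermitian with 0 ≤ M ≤ I, and let t ∈ [0,1]. Then |Tr(ρM) − Tr(ρ·P M P) − t·Tr(ρ(I−P))| ≤ 3·‖(I−P)ρ‖₁, where ‖A‖₁ = Tr √(A*A) is the trace norm. -/

import Mathlib

open Matrix
open scoped ComplexOrder Classical

/-- The (Hermitian positive semidefinite) square root of a positive semidefinite
complex matrix; junk value `0` if the matrix is not positive semidefinite. -/
noncomputable def msqrt {d : ℕ} (A : Matrix (Fin d) (Fin d) ℂ) :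
    Matrix (Fin d) (Fin d) ℂ :=
  if h : A.PosSemidef then
    (h.1.eigenvectorUnitary : Matrix (Fin d) (Fin d) ℂ) *
      diagonal (((↑) : ℝ → ℂ) ∘ (Real.sqrt ·) ∘ h.1.eigenvalues) *
      (star h.1.eigenvectorUnitary : Matrix (Fin d) (Fin d) ℂ)
  else 0

/-- The trace norm `‖A‖₁ = Tr √(A* A)` of a complex matrix. -/
noncomputable def traceNorm {d : ℕ} (A : Matrix (Fin d) (Fin d) ℂ) : ℝ :=
  ((msqrt (Aᴴ * A)).trace).re

lemma psd_diag {d : ℕ} {X : Matrix (Fin d) (Fin d) ℂ} (hX : X.PosSemidef) (i : Fin d) :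
    0 ≤ (X i i).re ∧ (X i i).im = 0 := by
  have h := hX.dotProduct_mulVec_nonneg (Pi.single i 1)
  have e : (star (Pi.single i 1 : Fin d → ℂ)) ⬝ᵥ (X *ᵥ Pi.single i 1) = X i i := by
    simp [dotProduct, mulVec, Pi.single_apply, Finset.sum_ite_eq, apply_ite]
  rw [e] at h
  exact ⟨(Complex.nonneg_iff.mp h).1, ((Complex.nonneg_iff.mp h).2).symm⟩

lemma msqrt_prop {d : ℕ} {A : Matrix (Fin d) (Fin d) ℂ} (hA : A.PosSemidef) :
    (msqrt A).PosSemidef ∧ msqrt A * msqrt A = A := by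
  set U : Matrix (Fin d) (Fin d) ℂ := (hA.1.eigenvectorUnitary : Matrix (Fin d) (Fin d) ℂ) with hU
  have hUU : star U * U = 1 := Unitary.coe_star_mul_self hA.1.eigenvectorUnitary
  have hs : msqrt A =
      U * diagonal (((↑) : ℝ → ℂ) ∘ (Real.sqrt ·) ∘ hA.1.eigenvalues) * star U := by
    rw [msqrt, dif_pos hA]
  constructor
  · rw [hs]
    have hD : (diagonal (((↑) : ℝ → ℂ) ∘ (Real.sqrt ·) ∘ hA.1.eigenvalues)).PosSemidef := by
      rw [posSemidef_diagonal_iff]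
      intro i
      simp only [Function.comp_apply]
      exact_mod_cast Real.sqrt_nonneg _
    exact hD.mul_mul_conjTranspose_same U
  · rw [hs]
    have e : U * diagonal (((↑) : ℝ → ℂ) ∘ (Real.sqrt ·) ∘ hA.1.eigenvalues) * star U *
        (U * diagonal (((↑) : ℝ → ℂ) ∘ (Real.sqrt ·) ∘ hA.1.eigenvalues) * star U)
        = U * (diagonal (((↑) : ℝ → ℂ) ∘ (Real.sqrt ·) ∘ hA.1.eigenvalues) *
          diagonal (((↑) : ℝ → ℂ) ∘ (Real.sqrt ·) ∘ hA.1.eigenvalues)) * star U := by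
      simp only [Matrix.mul_assoc]
      rw [← Matrix.mul_assoc (star U) U, hUU, Matrix.one_mul]
    have hDD : diagonal (((↑) : ℝ → ℂ) ∘ (Real.sqrt ·) ∘ hA.1.eigenvalues) *
        diagonal (((↑) : ℝ → ℂ) ∘ (Real.sqrt ·) ∘ hA.1.eigenvalues)
        = diagonal (RCLike.ofReal ∘ hA.1.eigenvalues) := by
      rw [diagonal_mul_diagonal]
      congr 1
      funext i
      simp only [Function.comp_apply]
      rw [← Complex.ofReal_mul, Real.mul_self_sqrt (hA.eigenvalues_nonneg i)]
      rfl
    rw [e, hDD]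
    conv_rhs => rw [hA.1.spectral_theorem]
    rw [Unitary.conjStarAlgAut_apply]

lemma abs_trace_mul_le {d : ℕ} (A C : Matrix (Fin d) (Fin d) ℂ)
    (hC : (1 - C * Cᴴ).PosSemidef) :
    ‖(A * C).trace‖ ≤ traceNorm A := by
  have hAA : (Aᴴ * A).PosSemidef := Matrix.posSemidef_conjTranspose_mul_self A
  set S : Matrix (Fin d) (Fin d) ℂ := msqrt (Aᴴ * A) with hSdef
  have hS : S.PosSemidef := (msqrt_prop hAA).1
  have hSS : S * S = Aᴴ * A := (msqrt_prop hAA).2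
  have hSh : S.IsHermitian := hS.isHermitian
  set V : Matrix (Fin d) (Fin d) ℂ := (hAA.1.eigenvectorUnitary : Matrix (Fin d) (Fin d) ℂ) with hVdef
  set μ : Fin d → ℝ := fun i => Real.sqrt (hAA.1.eigenvalues i) with hμdef
  have hμ0 : ∀ i, 0 ≤ μ i := fun i => Real.sqrt_nonneg _
  set D : Matrix (Fin d) (Fin d) ℂ := diagonal (fun i => (μ i : ℂ)) with hDdef
  have hspec : S = V * D * Vᴴ := by
    rw [hSdef, msqrt, dif_pos hAA]
    rfl
  have hV1 : Vᴴ * V = 1 := by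
    rw [← Matrix.star_eq_conjTranspose]
    exact Unitary.coe_star_mul_self hAA.1.eigenvectorUnitary
  have hV2 : V * Vᴴ = 1 := by
    rw [← Matrix.star_eq_conjTranspose]
    exact Unitary.coe_mul_star_self hAA.1.eigenvectorUnitary
  -- conjugation helper
  have conj_mul : ∀ X Y : Matrix (Fin d) (Fin d) ℂ,
      (Vᴴ * X * V) * (Vᴴ * Y * V) = Vᴴ * (X * Y) * V := by
    intro X Y
    calc (Vᴴ * X * V) * (Vᴴ * Y * V) = Vᴴ * X * (V * Vᴴ) * (Y * V) := by
            simp only [Matrix.mul_assoc]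
      _ = Vᴴ * (X * Y) * V := by rw [hV2, Matrix.mul_one]; simp only [Matrix.mul_assoc]
  set B : Matrix (Fin d) (Fin d) ℂ := Vᴴ * A * V with hBdef
  set K : Matrix (Fin d) (Fin d) ℂ := Vᴴ * C * V with hKdef
  have hVSV : Vᴴ * S * V = D := by
    rw [hspec]
    calc Vᴴ * (V * D * Vᴴ) * V = (Vᴴ * V) * D * (Vᴴ * V) := by simp only [Matrix.mul_assoc]
      _ = D := by rw [hV1, Matrix.one_mul, Matrix.mul_one]
  have hBH : Bᴴ = Vᴴ * Aᴴ * V := by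
    simp [hBdef, Matrix.conjTranspose_mul, Matrix.mul_assoc]
  have hBB : Bᴴ * B = D * D := by
    rw [hBH, hBdef, conj_mul, ← hSS, ← conj_mul, hVSV]
  have hKH : Kᴴ = Vᴴ * Cᴴ * V := by
    simp [hKdef, Matrix.conjTranspose_mul, Matrix.mul_assoc]
  have hKKe : K * Kᴴ = Vᴴ * (C * Cᴴ) * V := by rw [hKH, hKdef, conj_mul]
  have hKpsd : ((1 : Matrix (Fin d) (Fin d) ℂ) - K * Kᴴ).PosSemidef := by
    have h2 := hC.conjTranspose_mul_mul_same V
    have e : Vᴴ * (1 - C * Cᴴ) * V = 1 - K * Kᴴ := by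
      rw [Matrix.mul_sub, Matrix.sub_mul, Matrix.mul_one, hV1, hKKe]
    rwa [e] at h2
  -- row sums of K
  have hrow : ∀ i, (∑ j, Complex.normSq (K i j)) ≤ 1 := by
    intro i
    have h := (psd_diag hKpsd i).1
    have e : ((K * Kᴴ) i i) = ((∑ j, Complex.normSq (K i j) : ℝ) : ℂ) := by
      push_cast
      simp [Matrix.mul_apply, Matrix.conjTranspose_apply, Complex.mul_conj]
    rw [Matrix.sub_apply, Matrix.one_apply_eq, e] at h
    simp only [Complex.sub_re, Complex.one_re, Complex.ofReal_re] at h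
    linarith
  -- column sums of B
  have hcol : ∀ i, (∑ j, Complex.normSq (B j i)) = (μ i) ^ 2 := by
    intro i
    have e1 : ((Bᴴ * B) i i) = ((∑ j, Complex.normSq (B j i) : ℝ) : ℂ) := by
      simp [Matrix.mul_apply, Matrix.conjTranspose_apply, Complex.mul_conj, mul_comm]
    have e2 : ((D * D) i i) = (((μ i) ^ 2 : ℝ) : ℂ) := by
      simp [hDdef, Matrix.diagonal_mul_diagonal, Matrix.diagonal_apply_eq]
      push_cast
      ring
    rw [hBB, e2] at e1
    exact_mod_cast e1.symm
  -- per-row Cauchy-Schwarz bound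
  have key : ∀ i, ‖∑ j, K i j * B j i‖ ≤ μ i := by
    intro i
    set x : EuclideanSpace ℂ (Fin d) := WithLp.toLp 2 (fun j => star (K i j)) with hx
    set y : EuclideanSpace ℂ (Fin d) := WithLp.toLp 2 (fun j => B j i) with hy
    have hinner : (inner ℂ x y : ℂ) = ∑ j, K i j * B j i := by
      simp [PiLp.inner_apply, hx, hy, mul_comm]
    have hnx : ‖x‖ ≤ 1 := by
      rw [EuclideanSpace.norm_eq]
      refine Real.sqrt_le_one.mpr ?_
      calc (∑ j, ‖x j‖ ^ 2) = ∑ j, Complex.normSq (K i j) := by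
            refine Finset.sum_congr rfl fun j _ => ?_
            rw [show x j = star (K i j) from rfl, norm_star, ← Complex.sq_norm]
        _ ≤ 1 := hrow i
    have hny : ‖y‖ = μ i := by
      rw [EuclideanSpace.norm_eq]
      have : (∑ j, ‖y j‖ ^ 2) = (μ i) ^ 2 := by
        rw [← hcol i]
        refine Finset.sum_congr rfl fun j _ => ?_
        rw [show y j = B j i from rfl, ← Complex.sq_norm]
      rw [this, Real.sqrt_sq (hμ0 i)]
    calc ‖∑ j, K i j * B j i‖ = ‖(inner ℂ x y : ℂ)‖ := by
          rw [hinner]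
      _ ≤ ‖x‖ * ‖y‖ := norm_inner_le_norm x y
      _ ≤ 1 * μ i := by
          apply mul_le_mul hnx (le_of_eq hny) (norm_nonneg y)
          exact zero_le_one
      _ = μ i := one_mul _
  -- trace identity
  have htr : (A * C).trace = (K * B).trace := by
    have e1 : B * K = Vᴴ * (A * C) * V := by rw [hBdef, hKdef, conj_mul]
    have e2 : (Vᴴ * (A * C) * V).trace = (A * C).trace := by
      rw [Matrix.trace_mul_cycle, ← Matrix.mul_assoc, hV2, Matrix.one_mul]
    rw [← e2, ← e1, Matrix.trace_mul_comm]
  -- trace norm value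
  have htn : traceNorm A = ∑ i, μ i := by
    rw [traceNorm]
    have : (msqrt (Aᴴ * A)).trace = D.trace := by
      rw [← hSdef, hspec, Matrix.trace_mul_cycle, hV1, Matrix.one_mul]
    rw [this, Matrix.trace_diagonal]
    rw [← Complex.ofReal_sum]
    exact Complex.ofReal_re _
  rw [htr, htn, Matrix.trace]
  calc ‖∑ i, (K * B).diag i‖ ≤ ∑ i, ‖(K * B).diag i‖ := by
        exact norm_sum_le _ _
    _ ≤ ∑ i, μ i := by
        refine Finset.sum_le_sum fun i _ => ?_
        rw [Matrix.diag_apply, Matrix.mul_apply]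
        exact key i

lemma traceNorm_nonneg' {d : ℕ} (A : Matrix (Fin d) (Fin d) ℂ) : 0 ≤ traceNorm A := by
  have hAA : (Aᴴ * A).PosSemidef := Matrix.posSemidef_conjTranspose_mul_self A
  rw [traceNorm, Matrix.trace, Complex.re_sum]
  exact Finset.sum_nonneg fun i _ => (psd_diag (msqrt_prop hAA).1 i).1

/-- The approximation estimate (app) from the proof of Proposition 2: for a
density matrix `ρ`, a Hermitian projection `P`, a Hermitian `M` with
`0 ≤ M ≤ I` and `t ∈ [0,1]`,
`|Tr(ρ M) − Tr(ρ P M P) − t Tr(ρ (I − P))| ≤ 3 ‖(I − P) ρ‖₁`. -/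
theorem stmt17 {d : ℕ} (ρ P M : Matrix (Fin d) (Fin d) ℂ)
    (hρ : ρ.PosSemidef) (hρtr : ρ.trace = 1)
    (hPproj : P * P = P) (hPherm : Pᴴ = P)
    (hM : M.PosSemidef) (hM1 : (1 - M).PosSemidef)
    (t : ℝ) (ht0 : 0 ≤ t) (ht1 : t ≤ 1) :
    ‖(ρ * M).trace - (ρ * (P * M * P)).trace - (t : ℂ) * (ρ * (1 - P)).trace‖
      ≤ 3 * traceNorm ((1 - P) * ρ) := by

  set Q : Matrix (Fin d) (Fin d) ℂ := 1 - P with hQdef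
  have hρh : ρᴴ = ρ := hρ.isHermitian
  have hMh : Mᴴ = M := hM.isHermitian
  have hQherm : Qᴴ = Q := by
    simp [hQdef, Matrix.conjTranspose_sub, hPherm]
  have hQproj : Q * Q = Q := by
    simp only [hQdef, Matrix.mul_sub, Matrix.sub_mul, Matrix.mul_one, Matrix.one_mul, hPproj]
    abel
  have hQpsd : Q.PosSemidef := by
    have := Matrix.posSemidef_conjTranspose_mul_self Q
    rwa [hQherm, hQproj] at this
  -- 1 - M*M is psd
  set R : Matrix (Fin d) (Fin d) ℂ := msqrt M with hRdef
  have hRR : R * R = M := (msqrt_prop hM).2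
  have hRh : Rᴴ = R := (msqrt_prop hM).1.isHermitian
  have hRM : R * M = M * R := by rw [← hRR]; noncomm_ring
  have hMM : (M - M * M).PosSemidef := by
    have h := hM1.conjTranspose_mul_mul_same R
    have e : Rᴴ * (1 - M) * R = M - M * M := by
      rw [hRh, Matrix.mul_sub, Matrix.mul_one, Matrix.sub_mul, hRR, hRM, Matrix.mul_assoc, hRR]
    rwa [e] at h
  have hM2 : ((1 : Matrix (Fin d) (Fin d) ℂ) - M * M).PosSemidef := by
    have := hM1.add hMM
    have e : (1 - M) + (M - M * M) = 1 - M * M := by abel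
    rwa [e] at this
  have hC1 : ((1 : Matrix (Fin d) (Fin d) ℂ) - M * Mᴴ).PosSemidef := by rwa [hMh]
  have hC2 : ((1 : Matrix (Fin d) (Fin d) ℂ) - (P * M) * (P * M)ᴴ).PosSemidef := by
    have h := hM2.conjTranspose_mul_mul_same P
    rw [hPherm] at h
    have := hQpsd.add h
    have e : Q + P * (1 - M * M) * P = 1 - (P * M) * (P * M)ᴴ := by
      rw [Matrix.conjTranspose_mul, hPherm, hMh, hQdef, Matrix.mul_sub, Matrix.mul_one,
        Matrix.sub_mul, hPproj]
      have : P * M * (M * P) = P * (M * M) * P := by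
        simp only [Matrix.mul_assoc]
      rw [this]
      abel
    rwa [e] at this
  have hC3 : ((1 : Matrix (Fin d) (Fin d) ℂ) - 1 * (1 : Matrix (Fin d) (Fin d) ℂ)ᴴ).PosSemidef := by
    simp only [Matrix.conjTranspose_one, Matrix.mul_one, sub_self]
    exact Matrix.PosSemidef.zero
  set tn : ℝ := traceNorm (Q * ρ) with htndef
  have htn0 : 0 ≤ tn := traceNorm_nonneg' _
  -- trace rearrangements
  have step1 : (ρ * (P * M * P)).trace = ((P * ρ * P) * M).trace := by
    calc (ρ * (P * M * P)).trace = ((ρ * P) * (M * P)).trace := by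
          simp only [Matrix.mul_assoc]
      _ = ((M * P) * (ρ * P)).trace := Matrix.trace_mul_comm _ _
      _ = (M * (P * ρ * P)).trace := by
          congr 1
          simp only [Matrix.mul_assoc]
      _ = ((P * ρ * P) * M).trace := Matrix.trace_mul_comm _ _
  have step2 : (ρ * M).trace - ((P * ρ * P) * M).trace
      = ((Q * ρ) * M).trace + ((P * ρ * Q) * M).trace := by
    rw [← Matrix.trace_sub, ← Matrix.trace_add]
    congr 1
    simp only [hQdef]
    noncomm_ring
  have step3 : ((P * ρ * Q) * M).trace = star (((Q * ρ) * (P * M)).trace) := by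
    calc ((P * ρ * Q) * M).trace = (M * (P * ρ * Q)).trace := (Matrix.trace_mul_comm _ _)
      _ = (((Q * ρ) * (P * M))ᴴ).trace := by
          congr 1
          simp only [Matrix.conjTranspose_mul, hQherm, hρh, hPherm, hMh, Matrix.mul_assoc]
      _ = star (((Q * ρ) * (P * M)).trace) := Matrix.trace_conjTranspose _
  have step4 : (ρ * Q).trace = ((Q * ρ) * 1).trace := by
    rw [Matrix.mul_one, Matrix.trace_mul_comm]
  -- bounds
  have b1 : ‖((Q * ρ) * M).trace‖ ≤ tn := abs_trace_mul_le (Q * ρ) M hC1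
  have b2 : ‖((P * ρ * Q) * M).trace‖ ≤ tn := by
    rw [step3]
    have : ‖star (((Q * ρ) * (P * M)).trace)‖ =
        ‖((Q * ρ) * (P * M)).trace‖ := norm_star _
    rw [this]
    exact abs_trace_mul_le (Q * ρ) (P * M) hC2
  have b3 : ‖((Q * ρ) * 1).trace‖ ≤ tn := abs_trace_mul_le (Q * ρ) 1 hC3
  -- assemble
  calc ‖(ρ * M).trace - (ρ * (P * M * P)).trace - (t : ℂ) * (ρ * Q).trace‖
      = ‖((Q * ρ) * M).trace + ((P * ρ * Q) * M).trace
          - (t : ℂ) * ((Q * ρ) * 1).trace‖ := by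
        rw [step1, step4, step2]
    _ ≤ ‖((Q * ρ) * M).trace‖ + ‖((P * ρ * Q) * M).trace‖
          + ‖(t : ℂ) * ((Q * ρ) * 1).trace‖ := by
        refine le_trans (norm_sub_le _ _) ?_
        exact add_le_add (norm_add_le _ _) le_rfl
    _ ≤ tn + tn + t * tn := by
        refine add_le_add (add_le_add b1 b2) ?_
        rw [norm_mul, Complex.norm_of_nonneg ht0]
        exact mul_le_mul_of_nonneg_left b3 ht0
    _ ≤ 3 * tn := by nlinarith
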